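/- Let N be an N-layer (open or closed) Π³-net and fix 1≤i≤N. If m∈Live_i and m'∈R(m), then m'∈Live_i. -/

import Mathlib

open Finset

section PetriBasics

variable {P T : Type} [Fintype P] [Fintype T]

/-- Transition `t` is enabled at marking `m`. -/
def Enabled (Wm : P → T → ℕ) (m : P → ℕ) (t : T) : Prop :=
  ∀ p, Wm p t ≤ m p

/-- The marking obtained by firing transition `t` at marking `m`. -/
def Fire (Wm Wp : P → T → ℕ) (m : P → ℕ) (t : T) : P → ℕ :=
  fun p => m p - Wm p t + Wp p t

/-- One firing step. -/
def Step (Wm Wp : P → T → ℕ) (m m' : P → ℕ) : Prop :=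
  ∃ t, Enabled Wm m t ∧ m' = Fire Wm Wp m t

/-- Reachability. -/
def Reach (Wm Wp : P → T → ℕ) : (P → ℕ) → (P → ℕ) → Prop :=
  Relation.ReflTransGen (Step Wm Wp)

/-- One firing step using a transition from the set `S`. -/
def StepIn (Wm Wp : P → T → ℕ) (S : T → Prop) (m m' : P → ℕ) : Prop :=
  ∃ t, S t ∧ Enabled Wm m t ∧ m' = Fire Wm Wp m t

/-- Reachability using only transitions from the set `S`. -/
def ReachIn (Wm Wp : P → T → ℕ) (S : T → Prop) : (P → ℕ) → (P → ℕ) → Prop :=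
  Relation.ReflTransGen (StepIn Wm Wp S)

/-- The marked net `(N, m0)` is live. -/
def LiveMarked (Wm Wp : P → T → ℕ) (m0 : P → ℕ) : Prop :=
  ∀ (t : T) (m : P → ℕ), Reach Wm Wp m0 m →
    ∃ m', Reach Wm Wp m m' ∧ Enabled Wm m' t

/-- `b` is a bag of the net. -/
def IsBag (Wm Wp : P → T → ℕ) (b : P → ℕ) : Prop :=
  ∃ t, b = (fun p => Wm p t) ∨ b = (fun p => Wp p t)

/-- Edges of the bag graph. -/
def BagEdge (Wm Wp : P → T → ℕ) (b b' : P → ℕ) : Prop :=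
  ∃ t, b = (fun p => Wm p t) ∧ b' = (fun p => Wp p t)

/-- Every connected component of the bag graph is strongly connected. -/
def WeaklyReversible (Wm Wp : P → T → ℕ) : Prop :=
  ∀ b b' : P → ℕ,
    Relation.ReflTransGen (fun x y => BagEdge Wm Wp x y ∨ BagEdge Wm Wp y x) b b' →
    Relation.ReflTransGen (BagEdge Wm Wp) b b'

/-- `w · W(t)`, where `W = W⁺ − W⁻` is the incidence matrix. -/
def IncDot (Wm Wp : P → T → ℕ) (w : P → ℚ) (t : T) : ℚ :=
  ∑ p, w p * ((Wp p t : ℚ) - (Wm p t : ℚ))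

/-- `w` is a witness of the bag `b`. -/
def IsWitness (Wm Wp : P → T → ℕ) (b : P → ℕ) (w : P → ℚ) : Prop :=
  ∀ t, (b = (fun p => Wm p t) → IncDot Wm Wp w t = -1) ∧
       (b = (fun p => Wp p t) → IncDot Wm Wp w t = 1) ∧
       (b ≠ (fun p => Wm p t) → b ≠ (fun p => Wp p t) → IncDot Wm Wp w t = 0)

/-- `N` is a Π²-net. -/
def IsPi2 (Wm Wp : P → T → ℕ) : Prop :=
  WeaklyReversible Wm Wp ∧ ∀ b, IsBag Wm Wp b → ∃ w, IsWitness Wm Wp b w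

/-- The potential of a place: `‖b_p‖ − 1`. -/
def potOf (bag : P → P → ℕ) (p : P) : ℕ := (∑ q, bag p q) - 1

/-- Minimum of `f` over `S`, with default value `d` when `S` is empty. -/
def minPotD {α : Type} (S : Finset α) (f : α → ℕ) (d : ℕ) : ℕ :=
  if h : S.Nonempty then S.inf' h f else d

end PetriBasics

/-- An `Nn`-layer closed Π³-net. -/
structure ClosedPi3 (P T : Type) [Fintype P] [Fintype T] (Nn : ℕ) where
  Wm : P → T → ℕ
  Wp : P → T → ℕ
  no_useless : ∀ t, (fun p => Wm p t) ≠ (fun p => Wp p t)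
  no_dup : ∀ t t' : T, (fun p => Wm p t) = (fun p => Wm p t') →
      (fun p => Wp p t) = (fun p => Wp p t') → t = t'
  /-- the bag associated with each place -/
  bag : P → P → ℕ
  /-- the layer of each place -/
  layer : P → ℕ
  bag_isBag : ∀ p, IsBag Wm Wp (bag p)
  bag_surj : ∀ b, IsBag Wm Wp b → ∃ p, bag p = b
  bag_inj : Function.Injective bag
  bag_self : ∀ p, bag p p = 1
  layer_pos : ∀ p, 1 ≤ layer p
  layer_le : ∀ p, layer p ≤ Nn
  layer_surj : ∀ i, 1 ≤ i → i ≤ Nn → ∃ p, layer p = i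
  edge_layer : ∀ p q : P, BagEdge Wm Wp (bag p) (bag q) → layer p = layer q
  layer_conn : ∀ p q : P, layer p = layer q →
      Relation.ReflTransGen (BagEdge Wm Wp) (bag p) (bag q)
  resource : ∀ p q : P, q ≠ p → 0 < bag p q →
      layer q + 1 = layer p ∧ ∀ r, layer r = layer q → potOf bag r ≤ potOf bag q

namespace ClosedPi3

variable {P T : Type} [Fintype P] [Fintype T] {Nn : ℕ} (C : ClosedPi3 P T Nn)

def pot (p : P) : ℕ := potOf C.bag p

/-- `P_i`: the places of layer `i`. -/
def places (i : ℕ) : Finset P := Finset.univ.filter (fun p => C.layer p = i)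

/-- `POT_i`: the maximal potential in layer `i`. -/
def POT (i : ℕ) : ℕ := (C.places i).sup C.pot

/-- `P_i^max`: the places of maximal potential in layer `i`. -/
def placesMax (i : ℕ) : Finset P := (C.places i).filter (fun p => C.pot p = C.POT i)

/-- `cin(p) = POT_i − pot(p)` for `p ∈ P_i`. -/
def cin (p : P) : ℤ := (C.POT (C.layer p) : ℤ) - (C.pot p : ℤ)

/-- The invariant vector `v^(i)` (for `i = Nn` this is `v^(N)`). -/
def vvec (i : ℕ) : P → ℤ :=
  if i = Nn then (fun p => if C.layer p = Nn then 1 else 0)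
  else fun p => (if C.layer p = i then 1 else 0) + (if C.layer p = i + 1 then C.cin p else 0)

/-- `m · v^(i)`. -/
def vdot (i : ℕ) (m : P → ℕ) : ℤ := ∑ p, C.vvec i p * (m p : ℤ)

/-- `m ∈ Inv_i(m0)`. -/
def InvSet (m0 : P → ℕ) (i : ℕ) (m : P → ℕ) : Prop := C.vdot i m = C.vdot i m0

/-- `m ∈ Live_i`. -/
def LiveSet (i : ℕ) (m : P → ℕ) : Prop :=
  if i = Nn then 0 < ∑ p ∈ C.places Nn, m p
  else minPotD ((C.places (i + 1)).filter (fun p => 0 < m p)) C.pot (C.POT (i + 1))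
        ≤ ∑ p ∈ C.places i, m p

/-- `t` belongs to `⋃ {T_i | S i}`: the input bag of `t` lies in a layer satisfying `S`. -/
def transIn (S : ℕ → Prop) (t : T) : Prop :=
  ∃ p, S (C.layer p) ∧ C.bag p = (fun q => C.Wm q t)

/-- The marking `m` is `i`-live. -/
def iLive (i : ℕ) (m : P → ℕ) : Prop :=
  ∀ t, C.transIn (· ≤ i) t →
    ∃ m', ReachIn C.Wm C.Wp (C.transIn (· ≤ i)) m m' ∧ Enabled C.Wm m' t

end ClosedPi3

/-- An `Nn`-layer open Π³-net over places `P`: it is obtained from an `Nn`-layer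
closed Π³-net over `Option P` by deleting the place `none` (a.k.a. `p_ext`),
which lies in layer `Nn`. -/
structure OpenPi3 (P T : Type) [Fintype P] [Fintype T] (Nn : ℕ) where
  closed : ClosedPi3 (Option P) T Nn
  pext_layer : closed.layer none = Nn

namespace OpenPi3

variable {P T : Type} [Fintype P] [Fintype T] {Nn : ℕ} (O : OpenPi3 P T Nn)

/-- Backward incidence matrix of the open net. -/
def Wm : P → T → ℕ := fun p t => O.closed.Wm (some p) t

/-- Forward incidence matrix of the open net. -/
def Wp : P → T → ℕ := fun p t => O.closed.Wp (some p) t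

def layer (p : P) : ℕ := O.closed.layer (some p)

def pot (p : P) : ℕ := O.closed.pot (some p)

/-- `pot(p_ext)`. -/
def potExt : ℕ := O.closed.pot none

/-- `P_i`: the (remaining) places of layer `i`. -/
def places (i : ℕ) : Finset P := Finset.univ.filter (fun p => O.layer p = i)

/-- `POT_i`, with `POT_N = pot(p_ext)` for open nets. -/
def POT (i : ℕ) : ℕ := if i = Nn then O.potExt else (O.places i).sup O.pot

def placesMax (i : ℕ) : Finset P := (O.places i).filter (fun p => O.pot p = O.POT i)

def cin (p : P) : ℤ := (O.POT (O.layer p) : ℤ) - (O.pot p : ℤ)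

/-- The invariant vector `v^(i)` (used for `1 ≤ i ≤ Nn − 1`). -/
def vvec (i : ℕ) : P → ℤ :=
  fun p => (if O.layer p = i then 1 else 0) + (if O.layer p = i + 1 then O.cin p else 0)

def vdot (i : ℕ) (m : P → ℕ) : ℤ := ∑ p, O.vvec i p * (m p : ℤ)

def InvSet (m0 : P → ℕ) (i : ℕ) (m : P → ℕ) : Prop :=
  if i = Nn then True else O.vdot i m = O.vdot i m0

/-- `m ∈ Live_i` for the open net: for `i = N − 1` the virtual place `p_ext`
always counts as marked. -/
def LiveSet (i : ℕ) (m : P → ℕ) : Prop :=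
  if i = Nn then True
  else if i + 1 = Nn then
    min O.potExt
        (minPotD ((O.places Nn).filter (fun p => 0 < m p)) O.pot O.potExt)
      ≤ ∑ p ∈ O.places i, m p
  else
    minPotD ((O.places (i + 1)).filter (fun p => 0 < m p)) O.pot (O.POT (i + 1))
      ≤ ∑ p ∈ O.places i, m p

def transIn (S : ℕ → Prop) (t : T) : Prop := O.closed.transIn S t

def iLive (i : ℕ) (m : P → ℕ) : Prop :=
  ∀ t, O.transIn (· ≤ i) t →
    ∃ m', ReachIn O.Wm O.Wp (O.transIn (· ≤ i)) m m' ∧ Enabled O.Wm m' t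

end OpenPi3
section MinPotD

lemma minPotD_le_of_mem {α : Type} {S : Finset α} {f : α → ℕ} {d : ℕ} {p : α}
    (hp : p ∈ S) : minPotD S f d ≤ f p := by
  unfold minPotD
  rw [dif_pos ⟨p, hp⟩]
  exact Finset.inf'_le f hp

lemma minPotD_le_d {α : Type} {S : Finset α} {f : α → ℕ} {d : ℕ}
    (h : ∀ p ∈ S, f p ≤ d) : minPotD S f d ≤ d := by
  unfold minPotD
  split
  · rename_i hS
    obtain ⟨p, hp, he⟩ := Finset.exists_mem_eq_inf' hS f
    rw [he]; exact h p hp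
  · exact le_rfl

lemma minPotD_cases {α : Type} (S : Finset α) (f : α → ℕ) (d : ℕ) :
    d ≤ minPotD S f d ∨ ∃ p ∈ S, f p = minPotD S f d := by
  unfold minPotD
  split
  · rename_i hS
    obtain ⟨p, hp, he⟩ := Finset.exists_mem_eq_inf' hS f
    exact Or.inr ⟨p, hp, he.symm⟩
  · exact Or.inl le_rfl

end MinPotD

namespace ClosedPi3

variable {P T : Type} [Fintype P] [Fintype T] {Nn : ℕ} (C : ClosedPi3 P T Nn)

lemma sum_bag (p0 : P) : ∑ q, C.bag p0 q = C.pot p0 + 1 := by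
  have h1 : 1 ≤ ∑ q, C.bag p0 q := by
    calc 1 = C.bag p0 p0 := (C.bag_self p0).symm
    _ ≤ _ := Finset.single_le_sum (f := C.bag p0) (fun _ _ => Nat.zero_le _) (Finset.mem_univ p0)
  unfold pot potOf
  omega

lemma mem_places {p : P} {i : ℕ} : p ∈ C.places i ↔ C.layer p = i := by
  simp [places]

lemma sum_bag_places (p0 : P) (i : ℕ) :
    ∑ q ∈ C.places i, C.bag p0 q =
      (if C.layer p0 = i then 1 else 0) + (if C.layer p0 = i + 1 then C.pot p0 else 0) := by
  by_cases h1 : C.layer p0 = i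
  · rw [if_pos h1, if_neg (by omega)]
    rw [Finset.sum_eq_single_of_mem p0 (C.mem_places.2 h1)]
    · exact C.bag_self p0
    · intro q hq hqne
      by_contra h
      have := (C.resource p0 q hqne (Nat.pos_of_ne_zero h)).1
      have := C.mem_places.1 hq
      omega
  · rw [if_neg h1]
    by_cases h2 : C.layer p0 = i + 1
    · rw [if_pos h2]
      have hsplit := Finset.sum_filter_add_sum_filter_not Finset.univ (fun q => C.layer q = i) (C.bag p0)
      have hnot : ∑ q ∈ Finset.univ.filter (fun q => ¬ C.layer q = i), C.bag p0 q = 1 := by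
        rw [Finset.sum_eq_single_of_mem p0 (by simp [h2])]
        · exact C.bag_self p0
        · intro q hq hqne
          by_contra h
          have := (C.resource p0 q hqne (Nat.pos_of_ne_zero h)).1
          simp at hq
          omega
      have hall := C.sum_bag p0
      have : C.places i = Finset.univ.filter (fun q => C.layer q = i) := rfl
      rw [this]
      omega
    · rw [if_neg h2]
      apply Finset.sum_eq_zero
      intro q hq
      by_contra h
      have hqne : q ≠ p0 := by
        intro he; subst he; exact h1 (C.mem_places.1 hq)
      have := (C.resource p0 q hqne (Nat.pos_of_ne_zero h)).1
      have := C.mem_places.1 hq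
      omega

end ClosedPi3
namespace ClosedPi3

variable {P T : Type} [Fintype P] [Fintype T] {Nn : ℕ}

lemma liveSet_step (C : ClosedPi3 P T Nn) {i : ℕ} (hi1 : 1 ≤ i) (hiN : i ≤ Nn)
    {m m' : P → ℕ} (hl : C.LiveSet i m) (hs : Step C.Wm C.Wp m m') : C.LiveSet i m' := by
  obtain ⟨t, hen, rfl⟩ := hs
  obtain ⟨pm, hpm⟩ := C.bag_surj _ ⟨t, Or.inl rfl⟩
  obtain ⟨pp, hpp⟩ := C.bag_surj _ ⟨t, Or.inr rfl⟩
  have hlay : C.layer pm = C.layer pp := C.edge_layer pm pp ⟨t, hpm, hpp⟩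
  set j := C.layer pm with hj
  have hjN : j ≤ Nn := C.layer_le pm
  -- column values
  have hWmval : ∀ q, C.Wm q t = C.bag pm q := fun q => (congrFun hpm q).symm
  have hWpval : ∀ q, C.Wp q t = C.bag pp q := fun q => (congrFun hpp q).symm
  -- sums of the columns over layers
  have hWmsum : ∀ k, ∑ q ∈ C.places k, C.Wm q t
      = (if j = k then 1 else 0) + (if j = k + 1 then C.pot pm else 0) := by
    intro k
    have := C.sum_bag_places pm k
    simp only [← hWmval] at this
    exact this
  have hWpsum : ∀ k, ∑ q ∈ C.places k, C.Wp q t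
      = (if j = k then 1 else 0) + (if j = k + 1 then C.pot pp else 0) := by
    intro k
    have := C.sum_bag_places pp k
    simp only [← hWpval, ← hlay] at this
    exact this
  -- pointwise support
  have hWm0 : ∀ q, C.Wm q t ≠ 0 →
      q = pm ∨ (C.layer q + 1 = j ∧ ∀ r, C.layer r = C.layer q → C.pot r ≤ C.pot q) := by
    intro q h
    by_cases hq : q = pm
    · exact Or.inl hq
    · exact Or.inr (C.resource pm q hq (by rw [← hWmval]; omega))
  have hWp0 : ∀ q, C.Wp q t ≠ 0 →
      q = pp ∨ (C.layer q + 1 = j ∧ ∀ r, C.layer r = C.layer q → C.pot r ≤ C.pot q) := by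
    intro q h
    by_cases hq : q = pp
    · exact Or.inl hq
    · exact Or.inr (by
        have := C.resource pp q hq (by rw [← hWpval]; omega)
        rw [← hlay] at this
        exact this)
  -- sum of the fired marking
  have key : ∀ k, (∑ q ∈ C.places k, (Fire C.Wm C.Wp m t q : ℤ))
      = ∑ q ∈ C.places k, (m q : ℤ) - ∑ q ∈ C.places k, (C.Wm q t : ℤ)
        + ∑ q ∈ C.places k, (C.Wp q t : ℤ) := by
    intro k
    rw [← Finset.sum_sub_distrib, ← Finset.sum_add_distrib]
    refine Finset.sum_congr rfl (fun q _ => ?_)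
    have := hen q
    show ((m q - C.Wm q t + C.Wp q t : ℕ) : ℤ) = _
    omega
  have hcast : ∀ k, ((∑ q ∈ C.places k, Fire C.Wm C.Wp m t q : ℕ) : ℤ)
      = ∑ q ∈ C.places k, (Fire C.Wm C.Wp m t q : ℤ) := fun k => by push_cast; rfl
  have hcastm : ∀ k, ((∑ q ∈ C.places k, m q : ℕ) : ℤ)
      = ∑ q ∈ C.places k, (m q : ℤ) := fun k => by push_cast; rfl
  have hcastWm : ∀ k, ((∑ q ∈ C.places k, C.Wm q t : ℕ) : ℤ)
      = ∑ q ∈ C.places k, (C.Wm q t : ℤ) := fun k => by push_cast; rfl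
  have hcastWp : ∀ k, ((∑ q ∈ C.places k, C.Wp q t : ℕ) : ℤ)
      = ∑ q ∈ C.places k, (C.Wp q t : ℤ) := fun k => by push_cast; rfl
  have hensum : ∀ k, ∑ q ∈ C.places k, C.Wm q t ≤ ∑ q ∈ C.places k, m q :=
    fun k => Finset.sum_le_sum (fun q _ => hen q)
  -- main case split
  by_cases hN : i = Nn
  · -- top layer: total count preserved
    subst hN
    unfold LiveSet at hl ⊢
    rw [if_pos rfl] at hl ⊢
    have h1 := hWmsum i
    have h2 := hWpsum i
    have hne : j ≠ i + 1 := by omega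
    rw [if_neg hne] at h1 h2
    have h3 := key i
    rw [← hcast, ← hcastm, ← hcastWm, ← hcastWp] at h3
    omega
  · unfold LiveSet at hl ⊢
    rw [if_neg hN] at hl ⊢
    have hiN' : i < Nn := by omega
    -- helper for unchanged cases
    have hS_eq : (∀ q ∈ C.places (i+1), Fire C.Wm C.Wp m t q = m q) →
        (C.places (i+1)).filter (fun p => 0 < Fire C.Wm C.Wp m t p)
          = (C.places (i+1)).filter (fun p => 0 < m p) := by
      intro h
      apply Finset.filter_congr
      intro q hq
      rw [h q hq]
    have hunch : ∀ q : P, C.layer q ≠ j → C.layer q + 1 ≠ j →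
        Fire C.Wm C.Wp m t q = m q := by
      intro q h1 h2
      have hm : C.Wm q t = 0 := by
        by_contra h
        rcases hWm0 q h with h' | h'
        · exact h1 (by rw [h'])
        · exact h2 h'.1
      have hp : C.Wp q t = 0 := by
        by_contra h
        rcases hWp0 q h with h' | h'
        · exact h1 (by rw [h', hlay])
        · exact h2 h'.1
      show m q - C.Wm q t + C.Wp q t = m q
      omega
    by_cases hji : j = i
    · -- transition inside layer i: sum preserved, layer i+1 untouched
      have hS := hS_eq (fun q hq => hunch q (by rw [C.mem_places.1 hq]; omega)
        (by rw [C.mem_places.1 hq]; omega))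
      rw [hS]
      have h1 := hWmsum i; have h2 := hWpsum i
      rw [if_pos hji, if_neg (by omega)] at h1 h2
      have h3 := key i
      rw [← hcast, ← hcastm, ← hcastWm, ← hcastWp] at h3
      omega
    · by_cases hji1 : j = i + 1
      · -- transition at layer i+1
        have h1 := hWmsum i; have h2 := hWpsum i
        rw [if_neg (by omega), if_pos (by omega)] at h1 h2
        have h3 := key i
        rw [← hcast, ← hcastm, ← hcastWm, ← hcastWp] at h3
        have hens := hensum i
        have hppmem : pp ∈ (C.places (i+1)).filter (fun p => 0 < Fire C.Wm C.Wp m t p) := by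
          rw [Finset.mem_filter]
          refine ⟨C.mem_places.2 (by omega), ?_⟩
          have hWppp : C.Wp pp t = 1 := by rw [hWpval]; exact C.bag_self pp
          have := hen pp
          show 0 < m pp - C.Wm pp t + C.Wp pp t
          omega
        have hle := minPotD_le_of_mem (f := C.pot) (d := C.POT (i+1)) hppmem
        omega
      · by_cases hji2 : j = i + 2
        · -- transition at layer i+2: layer-i sum preserved, marked set may change
          have h1 := hWmsum i; have h2 := hWpsum i
          rw [if_neg (by omega), if_neg (by omega)] at h1 h2
          have h3 := key i
          rw [← hcast, ← hcastm, ← hcastWm, ← hcastWp] at h3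
          have hM : ∑ q ∈ C.places i, Fire C.Wm C.Wp m t q = ∑ q ∈ C.places i, m q := by omega
          rw [hM]
          have hub : minPotD ((C.places (i+1)).filter (fun p => 0 < Fire C.Wm C.Wp m t p))
              C.pot (C.POT (i+1)) ≤ C.POT (i+1) := by
            apply minPotD_le_d
            intro p hp
            exact Finset.le_sup (Finset.mem_filter.1 hp).1
          rcases minPotD_cases ((C.places (i+1)).filter (fun p => 0 < m p)) C.pot (C.POT (i+1))
            with hc | ⟨q0, hq0, hq0e⟩
          · omega
          · rw [Finset.mem_filter] at hq0
            by_cases hWmq0 : C.Wm q0 t = 0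
            · -- q0 stays marked
              have hq0' : q0 ∈ (C.places (i+1)).filter (fun p => 0 < Fire C.Wm C.Wp m t p) := by
                rw [Finset.mem_filter]
                refine ⟨hq0.1, ?_⟩
                show 0 < m q0 - C.Wm q0 t + C.Wp q0 t
                have := hq0.2
                omega
              have := minPotD_le_of_mem (f := C.pot) (d := C.POT (i+1)) hq0'
              omega
            · -- q0 is maximal, so POT ≤ pot q0
              rcases hWm0 q0 hWmq0 with h' | h'
              · exfalso
                have := C.mem_places.1 hq0.1
                rw [h'] at this
                omega
              · have hmax : C.POT (i+1) ≤ C.pot q0 := by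
                  apply Finset.sup_le
                  intro r hr
                  exact h'.2 r (by rw [C.mem_places.1 hr, C.mem_places.1 hq0.1])
                omega
        · -- transition far away: nothing changes
          have hS := hS_eq (fun q hq => hunch q (by rw [C.mem_places.1 hq]; omega)
            (by rw [C.mem_places.1 hq]; omega))
          rw [hS]
          have hMi : ∑ q ∈ C.places i, Fire C.Wm C.Wp m t q = ∑ q ∈ C.places i, m q :=
            Finset.sum_congr rfl (fun q hq => hunch q (by rw [C.mem_places.1 hq]; omega)
              (by rw [C.mem_places.1 hq]; omega))
          rw [hMi]
          exact hl

end ClosedPi3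
namespace OpenPi3

variable {P T : Type} [Fintype P] [Fintype T] {Nn : ℕ}

lemma mem_places (O : OpenPi3 P T Nn) {p : P} {i : ℕ} :
    p ∈ O.places i ↔ O.closed.layer (some p) = i := by
  unfold places
  rw [Finset.mem_filter]
  simp [layer]

lemma sum_places_split (O : OpenPi3 P T Nn) (k : ℕ) (f : Option P → ℕ) :
    ∑ q ∈ O.closed.places k, f q
      = (if O.closed.layer none = k then f none else 0) + ∑ q ∈ O.places k, f (some q) := by
  classical
  unfold ClosedPi3.places OpenPi3.places
  rw [Finset.sum_filter, Finset.sum_filter, Fintype.sum_option]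
  rfl

end OpenPi3
namespace OpenPi3

lemma liveSet_step {P T : Type} [Fintype P] [Fintype T] {Nn : ℕ}
    (O : OpenPi3 P T Nn) {i : ℕ} (hi1 : 1 ≤ i) (hiN : i ≤ Nn)
    {m m' : P → ℕ} (hl : O.LiveSet i m) (hs : Step O.Wm O.Wp m m') : O.LiveSet i m' := by
  by_cases hN : i = Nn
  · unfold LiveSet
    rw [if_pos hN]
    trivial
  obtain ⟨t, hen, rfl⟩ := hs
  obtain ⟨pm, hpm⟩ := O.closed.bag_surj _ ⟨t, Or.inl rfl⟩
  obtain ⟨pp, hpp⟩ := O.closed.bag_surj _ ⟨t, Or.inr rfl⟩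
  have hlay : O.closed.layer pm = O.closed.layer pp := O.closed.edge_layer pm pp ⟨t, hpm, hpp⟩
  set j := O.closed.layer pm with hj
  have hjN : j ≤ Nn := O.closed.layer_le pm
  have hWmval : ∀ q, O.closed.Wm q t = O.closed.bag pm q := fun q => (congrFun hpm q).symm
  have hWpval : ∀ q, O.closed.Wp q t = O.closed.bag pp q := fun q => (congrFun hpp q).symm
  -- sums of the open columns over open layers k ≠ Nn
  have hWmsum : ∀ k, k ≠ Nn → ∑ q ∈ O.places k, O.Wm q t
      = (if j = k then 1 else 0) + (if j = k + 1 then O.closed.pot pm else 0) := by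
    intro k hk
    have h1 := O.closed.sum_bag_places pm k
    simp only [← hWmval] at h1
    rw [← hj] at h1
    have h2 := O.sum_places_split k (fun q => O.closed.Wm q t)
    rw [O.pext_layer, if_neg (Ne.symm hk)] at h2
    have h3 : ∑ q ∈ O.places k, O.Wm q t = ∑ q ∈ O.places k, O.closed.Wm (some q) t := rfl
    omega
  have hWpsum : ∀ k, k ≠ Nn → ∑ q ∈ O.places k, O.Wp q t
      = (if j = k then 1 else 0) + (if j = k + 1 then O.closed.pot pp else 0) := by
    intro k hk
    have h1 := O.closed.sum_bag_places pp k
    simp only [← hWpval, ← hlay] at h1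
    have h2 := O.sum_places_split k (fun q => O.closed.Wp q t)
    rw [O.pext_layer, if_neg (Ne.symm hk)] at h2
    have h3 : ∑ q ∈ O.places k, O.Wp q t = ∑ q ∈ O.places k, O.closed.Wp (some q) t := rfl
    omega
  -- pointwise support
  have hWm0 : ∀ q, O.closed.Wm q t ≠ 0 →
      q = pm ∨ (O.closed.layer q + 1 = j ∧
        ∀ r, O.closed.layer r = O.closed.layer q → O.closed.pot r ≤ O.closed.pot q) := by
    intro q h
    by_cases hq : q = pm
    · exact Or.inl hq
    · exact Or.inr (O.closed.resource pm q hq (by rw [← hWmval]; omega))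
  have hWp0 : ∀ q, O.closed.Wp q t ≠ 0 →
      q = pp ∨ (O.closed.layer q + 1 = j ∧
        ∀ r, O.closed.layer r = O.closed.layer q → O.closed.pot r ≤ O.closed.pot q) := by
    intro q h
    by_cases hq : q = pp
    · exact Or.inl hq
    · refine Or.inr ?_
      have := O.closed.resource pp q hq (by rw [← hWpval]; omega)
      rw [← hlay] at this
      exact this
  have hunch : ∀ q : P, O.closed.layer (some q) ≠ j → O.closed.layer (some q) + 1 ≠ j →
      Fire O.Wm O.Wp m t q = m q := by
    intro q h1 h2
    have hm : O.Wm q t = 0 := by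
      by_contra h
      rcases hWm0 (some q) h with h' | h'
      · exact h1 (by rw [h'])
      · exact h2 h'.1
    have hp : O.Wp q t = 0 := by
      by_contra h
      rcases hWp0 (some q) h with h' | h'
      · exact h1 (by rw [h', hlay])
      · exact h2 h'.1
    show m q - O.Wm q t + O.Wp q t = m q
    omega
  -- sum of the fired marking
  have key : ∀ k, (∑ q ∈ O.places k, (Fire O.Wm O.Wp m t q : ℤ))
      = ∑ q ∈ O.places k, (m q : ℤ) - ∑ q ∈ O.places k, (O.Wm q t : ℤ)
        + ∑ q ∈ O.places k, (O.Wp q t : ℤ) := by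
    intro k
    rw [← Finset.sum_sub_distrib, ← Finset.sum_add_distrib]
    refine Finset.sum_congr rfl (fun q _ => ?_)
    have := hen q
    show ((m q - O.Wm q t + O.Wp q t : ℕ) : ℤ) = _
    omega
  have hcast : ∀ k, ((∑ q ∈ O.places k, Fire O.Wm O.Wp m t q : ℕ) : ℤ)
      = ∑ q ∈ O.places k, (Fire O.Wm O.Wp m t q : ℤ) := fun k => by push_cast; rfl
  have hcastm : ∀ k, ((∑ q ∈ O.places k, m q : ℕ) : ℤ)
      = ∑ q ∈ O.places k, (m q : ℤ) := fun k => by push_cast; rfl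
  have hcastWm : ∀ k, ((∑ q ∈ O.places k, O.Wm q t : ℕ) : ℤ)
      = ∑ q ∈ O.places k, (O.Wm q t : ℤ) := fun k => by push_cast; rfl
  have hcastWp : ∀ k, ((∑ q ∈ O.places k, O.Wp q t : ℕ) : ℤ)
      = ∑ q ∈ O.places k, (O.Wp q t : ℤ) := fun k => by push_cast; rfl
  have hensum : ∀ k, ∑ q ∈ O.places k, O.Wm q t ≤ ∑ q ∈ O.places k, m q :=
    fun k => Finset.sum_le_sum (fun q _ => hen q)
  have hS_eq : ∀ k, (∀ q ∈ O.places k, Fire O.Wm O.Wp m t q = m q) →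
      (O.places k).filter (fun p => 0 < Fire O.Wm O.Wp m t p)
        = (O.places k).filter (fun p => 0 < m p) := by
    intro k h
    apply Finset.filter_congr
    intro q hq
    rw [h q hq]
  unfold LiveSet at hl ⊢
  rw [if_neg hN] at hl ⊢
  by_cases hN1 : i + 1 = Nn
  · rw [if_pos hN1] at hl ⊢
    by_cases hji : j = i
    · -- transition inside layer i
      have hS := hS_eq Nn (fun q hq => hunch q
        (by rw [(O.mem_places).1 hq]; omega) (by rw [(O.mem_places).1 hq]; omega))
      rw [hS]
      have h1 := hWmsum i (by omega); have h2 := hWpsum i (by omega)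
      rw [if_pos hji] at h1 h2
      have hne : j ≠ i + 1 := by omega
      rw [if_neg hne] at h1 h2
      have h3 := key i
      rw [← hcast i, ← hcastm i, ← hcastWm i, ← hcastWp i] at h3
      omega
    · by_cases hji1 : j = Nn
      · -- transition at the top layer
        have h1 := hWmsum i (by omega); have h2 := hWpsum i (by omega)
        rw [if_neg (by omega), if_pos (by omega)] at h1 h2
        have h3 := key i
        rw [← hcast i, ← hcastm i, ← hcastWm i, ← hcastWp i] at h3
        have hens := hensum i
        cases pp with
        | none =>
          have hpotext : O.potExt = O.closed.pot none := rfl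
          have hmin : min O.potExt (minPotD ((O.places Nn).filter
              (fun p => 0 < Fire O.Wm O.Wp m t p)) O.pot O.potExt) ≤ O.potExt :=
            min_le_left _ _
          omega
        | some s =>
          have hsmem : s ∈ (O.places Nn).filter (fun p => 0 < Fire O.Wm O.Wp m t p) := by
            rw [Finset.mem_filter]
            refine ⟨(O.mem_places).2 (by rw [← hlay]; omega), ?_⟩
            have hWppp : O.Wp s t = 1 := by
              show O.closed.Wp (some s) t = 1
              rw [hWpval]
              exact O.closed.bag_self (some s)
            have := hen s
            show 0 < m s - O.Wm s t + O.Wp s t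
            omega
          have hle := minPotD_le_of_mem (f := O.pot) (d := O.potExt) hsmem
          have hmin : min O.potExt (minPotD ((O.places Nn).filter
              (fun p => 0 < Fire O.Wm O.Wp m t p)) O.pot O.potExt)
              ≤ minPotD ((O.places Nn).filter (fun p => 0 < Fire O.Wm O.Wp m t p))
                O.pot O.potExt := min_le_right _ _
          have hpots : O.pot s = O.closed.pot (some s) := rfl
          omega
      · -- far away
        have hS := hS_eq Nn (fun q hq => hunch q
          (by rw [(O.mem_places).1 hq]; omega) (by rw [(O.mem_places).1 hq]; omega))
        rw [hS]
        have hMi : ∑ q ∈ O.places i, Fire O.Wm O.Wp m t q = ∑ q ∈ O.places i, m q :=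
          Finset.sum_congr rfl (fun q hq => hunch q
            (by rw [(O.mem_places).1 hq]; omega) (by rw [(O.mem_places).1 hq]; omega))
        rw [hMi]
        exact hl
  · rw [if_neg hN1] at hl ⊢
    have hPOT : O.POT (i + 1) = (O.places (i + 1)).sup O.pot := by
      unfold POT
      rw [if_neg hN1]
    by_cases hji : j = i
    · have hS := hS_eq (i + 1) (fun q hq => hunch q
        (by rw [(O.mem_places).1 hq]; omega) (by rw [(O.mem_places).1 hq]; omega))
      rw [hS]
      have h1 := hWmsum i (by omega); have h2 := hWpsum i (by omega)
      rw [if_pos hji] at h1 h2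
      have hne : j ≠ i + 1 := by omega
      rw [if_neg hne] at h1 h2
      have h3 := key i
      rw [← hcast i, ← hcastm i, ← hcastWm i, ← hcastWp i] at h3
      omega
    · by_cases hji1 : j = i + 1
      · have h1 := hWmsum i (by omega); have h2 := hWpsum i (by omega)
        rw [if_neg (by omega), if_pos (by omega)] at h1 h2
        have h3 := key i
        rw [← hcast i, ← hcastm i, ← hcastWm i, ← hcastWp i] at h3
        have hens := hensum i
        cases pp with
        | none =>
          exfalso
          have := O.pext_layer
          rw [← hlay] at this
          omega
        | some s =>
          have hsmem : s ∈ (O.places (i + 1)).filter (fun p => 0 < Fire O.Wm O.Wp m t p) := by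
            rw [Finset.mem_filter]
            refine ⟨(O.mem_places).2 (by rw [← hlay]; omega), ?_⟩
            have hWppp : O.Wp s t = 1 := by
              show O.closed.Wp (some s) t = 1
              rw [hWpval]
              exact O.closed.bag_self (some s)
            have := hen s
            show 0 < m s - O.Wm s t + O.Wp s t
            omega
          have hle := minPotD_le_of_mem (f := O.pot) (d := O.POT (i + 1)) hsmem
          have hpots : O.pot s = O.closed.pot (some s) := rfl
          omega
      · by_cases hji2 : j = i + 2
        · -- transition at layer i+2
          have h1 := hWmsum i (by omega); have h2 := hWpsum i (by omega)
          rw [if_neg (by omega), if_neg (by omega)] at h1 h2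
          have h3 := key i
          rw [← hcast i, ← hcastm i, ← hcastWm i, ← hcastWp i] at h3
          have hM : ∑ q ∈ O.places i, Fire O.Wm O.Wp m t q = ∑ q ∈ O.places i, m q := by omega
          rw [hM]
          have hub : minPotD ((O.places (i + 1)).filter (fun p => 0 < Fire O.Wm O.Wp m t p))
              O.pot (O.POT (i + 1)) ≤ O.POT (i + 1) := by
            apply minPotD_le_d
            intro p hp
            rw [hPOT]
            exact Finset.le_sup (Finset.mem_filter.1 hp).1
          rcases minPotD_cases ((O.places (i + 1)).filter (fun p => 0 < m p)) O.pot (O.POT (i + 1))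
            with hc | ⟨q0, hq0, hq0e⟩
          · omega
          · rw [Finset.mem_filter] at hq0
            by_cases hWmq0 : O.Wm q0 t = 0
            · have hq0' : q0 ∈ (O.places (i + 1)).filter (fun p => 0 < Fire O.Wm O.Wp m t p) := by
                rw [Finset.mem_filter]
                refine ⟨hq0.1, ?_⟩
                show 0 < m q0 - O.Wm q0 t + O.Wp q0 t
                have := hq0.2
                omega
              have := minPotD_le_of_mem (f := O.pot) (d := O.POT (i + 1)) hq0'
              omega
            · rcases hWm0 (some q0) hWmq0 with h' | h'
              · exfalso
                have := (O.mem_places).1 hq0.1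
                rw [h'] at this
                omega
              · have hmax : O.POT (i + 1) ≤ O.pot q0 := by
                  rw [hPOT]
                  apply Finset.sup_le
                  intro r hr
                  exact h'.2 (some r) (by rw [(O.mem_places).1 hr, (O.mem_places).1 hq0.1])
                omega
        · have hS := hS_eq (i + 1) (fun q hq => hunch q
            (by rw [(O.mem_places).1 hq]; omega) (by rw [(O.mem_places).1 hq]; omega))
          rw [hS]
          have hMi : ∑ q ∈ O.places i, Fire O.Wm O.Wp m t q = ∑ q ∈ O.places i, m q :=
            Finset.sum_congr rfl (fun q hq => hunch q
              (by rw [(O.mem_places).1 hq]; omega) (by rw [(O.mem_places).1 hq]; omega))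
          rw [hMi]
          exact hl

end OpenPi3
/-- each set `Live_i` is closed under reachability. -/
theorem stmt_10 :
    (∀ (P T : Type) [Fintype P] [Fintype T] (Nn : ℕ) (C : ClosedPi3 P T Nn),
      ∀ i ∈ Finset.Icc 1 Nn, ∀ m m' : P → ℕ,
        C.LiveSet i m → Reach C.Wm C.Wp m m' → C.LiveSet i m') ∧
    (∀ (P T : Type) [Fintype P] [Fintype T] (Nn : ℕ) (O : OpenPi3 P T Nn),
      ∀ i ∈ Finset.Icc 1 Nn, ∀ m m' : P → ℕ,
        O.LiveSet i m → Reach O.Wm O.Wp m m' → O.LiveSet i m') := by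
  constructor
  · intro P T _ _ Nn C i hi m m' hl hr
    rw [Finset.mem_Icc] at hi
    induction hr with
    | refl => exact hl
    | tail _ hstep ih => exact C.liveSet_step hi.1 hi.2 ih hstep
  · intro P T _ _ Nn O i hi m m' hl hr
    rw [Finset.mem_Icc] at hi
    induction hr with
    | refl => exact hl
    | tail _ hstep ih => exact O.liveSet_step hi.1 hi.2 ih hstep
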